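/- General simulation lemma: for any (possibly history-dependent) policy π and any two MDP models m and m̂ with rewards bounded in [−r_max, r_max] and discount γ ∈ [0,1), the difference in discounted returns satisfies |J(π, m) − J(π, m̂)| ≤ (2 r_max / (1−γ)²) · E_{(s,a)∼d^π_{m̂}}[TV(m(s,a), m̂(s,a))], where d^π_{m̂} is the discounted state-action occupancy of π under m̂ and TV is the total variation distance between joint reward-next-state distributions. -/

import Mathlib

/-- A history: a list of past (state, action, reward) triples (most recent first)
together with the current state. -/
abbrev Hist (S A Rw : Type*) := List (S × A × Rw) × S

/-- Probability of a history under initial distribution `ρ`, history-dependent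
policy `π`, and model `m` (a joint reward–next-state distribution). -/
noncomputable def histProb {S A Rw : Type*}
    (ρ : S → ℝ) (π : Hist S A Rw → A → ℝ) (m : S → A → Rw × S → ℝ) :
    List (S × A × Rw) → S → ℝ
  | [], s => ρ s
  | (s, a, r) :: rest, s' =>
      histProb ρ π m rest s * π (rest, s) a * m s a (r, s')

/-- Discounted return `J(π, m) = E[∑_t γ^t r_{t+1}]`. -/
noncomputable def Jval {S A Rw : Type*} [Fintype S] [Fintype A] [Fintype Rw]
    (γ : ℝ) (rval : Rw → ℝ) (ρ : S → ℝ) (π : Hist S A Rw → A → ℝ)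
    (m : S → A → Rw × S → ℝ) : ℝ :=
  ∑' h : Hist S A Rw, γ ^ h.1.length * histProb ρ π m h.1 h.2 *
    ∑ a, π h a * ∑ x : Rw × S, m h.2 a x * rval x.1

/-- Normalized discounted state-action occupancy
`d^π_m(s,a) = (1−γ)∑_t γ^t Pr(s_t=s, a_t=a)`. -/
noncomputable def occupancy {S A Rw : Type*} [DecidableEq S]
    (γ : ℝ) (ρ : S → ℝ) (π : Hist S A Rw → A → ℝ)
    (m : S → A → Rw × S → ℝ) (s : S) (a : A) : ℝ :=
  (1 - γ) * ∑' h : Hist S A Rw,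
    if h.2 = s then γ ^ h.1.length * histProb ρ π m h.1 h.2 * π h a else 0

section Machinery
set_option linter.unusedSectionVars false
set_option linter.unusedVariables false

namespace GSL

instance instFL (X : Type*) [Fintype X] (n : ℕ) : Fintype {l : List X // l.length = n} :=
  inferInstanceAs (Fintype (List.Vector X n))

variable {S A Rw : Type*} [Fintype S] [Fintype A] [Fintype Rw]

/-- time-dependent history probability -/
noncomputable def histProbT (ρ : S → ℝ) (π : Hist S A Rw → A → ℝ)
    (M : ℕ → S → A → Rw × S → ℝ) : List (S × A × Rw) → S → ℝ
  | [], s => ρ s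
  | (s, a, r) :: rest, s' =>
      histProbT ρ π M rest s * π (rest, s) a * M rest.length s a (r, s')

variable {ρ : S → ℝ} {π : Hist S A Rw → A → ℝ}

lemma histProbT_const (m : S → A → Rw × S → ℝ) :
    ∀ (l : List (S × A × Rw)) (s' : S),
      histProbT ρ π (fun _ => m) l s' = histProb ρ π m l s'
  | [], s => rfl
  | (s, a, r) :: rest, s' => by
      rw [histProbT, histProb, histProbT_const m rest s]

lemma histProbT_nonneg (hρ0 : ∀ s, 0 ≤ ρ s) (hπ0 : ∀ h a, 0 ≤ π h a)
    {M : ℕ → S → A → Rw × S → ℝ} (hM0 : ∀ t s a x, 0 ≤ M t s a x) :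
    ∀ (l : List (S × A × Rw)) (s' : S), 0 ≤ histProbT ρ π M l s'
  | [], s => hρ0 s
  | (s, a, r) :: rest, s' =>
      mul_nonneg (mul_nonneg (histProbT_nonneg hρ0 hπ0 hM0 rest s) (hπ0 _ _)) (hM0 _ _ _ _)

lemma histProbT_congr {M M' : ℕ → S → A → Rw × S → ℝ} :
    ∀ (l : List (S × A × Rw)) (s' : S), (∀ t, t < l.length → M t = M' t) →
      histProbT ρ π M l s' = histProbT ρ π M' l s'
  | [], s, _ => rfl
  | (s, a, r) :: rest, s', hag => by
      rw [histProbT, histProbT, histProbT_congr rest s (fun t ht => hag t (by simp; omega)),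
        hag rest.length (by simp)]

/-- equiv for length-0 histories -/
def nilE (S A Rw : Type*) : S ≃ ({l : List (S × A × Rw) // l.length = 0} × S) where
  toFun s := (⟨[], rfl⟩, s)
  invFun q := q.2
  left_inv s := rfl
  right_inv := fun ⟨⟨l, hl⟩, s⟩ => by
    have : l = [] := List.length_eq_zero_iff.mp hl
    subst this; rfl

/-- cons equiv for histories -/
def consE (S A Rw : Type*) (n : ℕ) :
    (({l : List (S × A × Rw) // l.length = n} × S) × A × (Rw × S)) ≃
      ({l : List (S × A × Rw) // l.length = n + 1} × S) where
  toFun p := (⟨(p.1.2, p.2.1, p.2.2.1) :: p.1.1.1, by simp [p.1.1.2]⟩, p.2.2.2)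
  invFun q :=
    have hne : q.1.1 ≠ [] := by
      intro h
      have := q.1.2
      rw [h] at this
      simp at this
    ((⟨q.1.1.tail, by simp [q.1.2]⟩, (q.1.1.head hne).1),
      (q.1.1.head hne).2.1, ((q.1.1.head hne).2.2, q.2))
  left_inv := fun ⟨⟨⟨l, hl⟩, s⟩, a, r, s'⟩ => rfl
  right_inv := fun ⟨⟨l, hl⟩, s'⟩ => by
    match l, hl with
    | (s, a, r) :: l, hl => rfl

lemma sum_Hn_zero (F : {l : List (S × A × Rw) // l.length = 0} × S → ℝ) :
    ∑ q, F q = ∑ s, F (⟨[], rfl⟩, s) :=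
  ((nilE S A Rw).sum_comp F).symm

lemma sum_Hn_succ {n : ℕ} (F : {l : List (S × A × Rw) // l.length = n + 1} × S → ℝ) :
    ∑ q, F q = ∑ h : {l : List (S × A × Rw) // l.length = n} × S, ∑ a : A, ∑ x : Rw × S,
      F (consE S A Rw n (h, a, x)) := by
  rw [← Equiv.sum_comp (consE S A Rw n) F, Fintype.sum_prod_type]
  exact Finset.sum_congr rfl fun h _ => Fintype.sum_prod_type _

lemma histProbT_consE (M : ℕ → S → A → Rw × S → ℝ) {n : ℕ}
    (h : {l : List (S × A × Rw) // l.length = n} × S) (a : A) (x : Rw × S) :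
    histProbT ρ π M ((consE S A Rw n (h, a, x)).1 : {l : List (S × A × Rw) // l.length = n + 1}).1
        (consE S A Rw n (h, a, x)).2
      = histProbT ρ π M h.1.1 h.2 * π (h.1.1, h.2) a * M n h.2 a x := by
  obtain ⟨⟨l, hl⟩, s⟩ := h
  obtain ⟨r, s'⟩ := x
  simp only [consE, Equiv.coe_fn_mk, histProbT, hl]

end GSL

section Part2
namespace GSL

variable {S A Rw : Type*} [Fintype S] [Fintype A] [Fintype Rw]
variable {ρ : S → ℝ} {π : Hist S A Rw → A → ℝ} {rval : Rw → ℝ} {γ rmax : ℝ}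

/-- total mass of length-n histories is 1 -/
lemma sum_histProbT (hρ1 : ∑ s, ρ s = 1) (hπ1 : ∀ h, ∑ a, π h a = 1)
    {M : ℕ → S → A → Rw × S → ℝ} (hM1 : ∀ t s a, ∑ x, M t s a x = 1) :
    ∀ n : ℕ, ∑ h : {l : List (S × A × Rw) // l.length = n} × S,
      histProbT ρ π M h.1.1 h.2 = 1 := by
  intro n
  induction n with
  | zero =>
    rw [sum_Hn_zero (fun h => histProbT ρ π M h.1.1 h.2)]
    simpa [histProbT] using hρ1
  | succ n ih =>
    rw [sum_Hn_succ (fun h => histProbT ρ π M h.1.1 h.2)]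
    have : ∀ h : {l : List (S × A × Rw) // l.length = n} × S,
        ∑ a : A, ∑ x : Rw × S,
          histProbT ρ π M ((consE S A Rw n (h, a, x)).1 :
            {l : List (S × A × Rw) // l.length = n + 1}).1 (consE S A Rw n (h, a, x)).2
        = histProbT ρ π M h.1.1 h.2 := by
      intro h
      have : ∀ a : A, ∑ x : Rw × S,
          histProbT ρ π M ((consE S A Rw n (h, a, x)).1 :
            {l : List (S × A × Rw) // l.length = n + 1}).1 (consE S A Rw n (h, a, x)).2
          = histProbT ρ π M h.1.1 h.2 * π (h.1.1, h.2) a := by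
        intro a
        rw [Finset.sum_congr rfl fun x _ => histProbT_consE M h a x, ← Finset.mul_sum,
          hM1 n h.2 a, mul_one]
      rw [Finset.sum_congr rfl fun a _ => this a, ← Finset.mul_sum, hπ1 (h.1.1, h.2), mul_one]
    rw [Finset.sum_congr rfl fun h _ => this h, ih]

/-- expected immediate reward -/
noncomputable def rbar (π : Hist S A Rw → A → ℝ) (rval : Rw → ℝ)
    (m : S → A → Rw × S → ℝ) (h : Hist S A Rw) : ℝ :=
  ∑ a, π h a * ∑ x : Rw × S, m h.2 a x * rval x.1

lemma abs_rbar_le (hrm : 0 ≤ rmax) (hrval : ∀ r, |rval r| ≤ rmax)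
    (hπ0 : ∀ h a, 0 ≤ π h a) (hπ1 : ∀ h, ∑ a, π h a = 1)
    {m : S → A → Rw × S → ℝ} (hm0 : ∀ s a x, 0 ≤ m s a x) (hm1 : ∀ s a, ∑ x, m s a x = 1)
    (h : Hist S A Rw) : |rbar π rval m h| ≤ rmax := by
  have inner : ∀ a : A, |∑ x : Rw × S, m h.2 a x * rval x.1| ≤ rmax := by
    intro a
    calc |∑ x : Rw × S, m h.2 a x * rval x.1| ≤ ∑ x : Rw × S, |m h.2 a x * rval x.1| :=
          Finset.abs_sum_le_sum_abs _ _
      _ ≤ ∑ x : Rw × S, m h.2 a x * rmax := by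
          refine Finset.sum_le_sum fun x _ => ?_
          rw [abs_mul, abs_of_nonneg (hm0 _ _ _)]
          exact mul_le_mul_of_nonneg_left (hrval _) (hm0 _ _ _)
      _ = rmax := by rw [← Finset.sum_mul, hm1, one_mul]
  calc |rbar π rval m h| ≤ ∑ a, |π h a * ∑ x : Rw × S, m h.2 a x * rval x.1| :=
        Finset.abs_sum_le_sum_abs _ _
    _ ≤ ∑ a, π h a * rmax := by
        refine Finset.sum_le_sum fun a _ => ?_
        rw [abs_mul, abs_of_nonneg (hπ0 _ _)]
        exact mul_le_mul_of_nonneg_left (inner a) (hπ0 _ _)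
    _ = rmax := by rw [← Finset.sum_mul, hπ1, one_mul]

lemma abs_rbar_sub_le (hrm : 0 ≤ rmax) (hrval : ∀ r, |rval r| ≤ rmax)
    (hπ0 : ∀ h a, 0 ≤ π h a)
    {m mhat : S → A → Rw × S → ℝ} (h : Hist S A Rw) :
    |rbar π rval m h - rbar π rval mhat h| ≤
      rmax * ∑ a, π h a * ∑ x : Rw × S, |m h.2 a x - mhat h.2 a x| := by
  have : rbar π rval m h - rbar π rval mhat h
      = ∑ a, π h a * ∑ x : Rw × S, (m h.2 a x - mhat h.2 a x) * rval x.1 := by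
    unfold rbar
    rw [← Finset.sum_sub_distrib]
    refine Finset.sum_congr rfl fun a _ => ?_
    rw [← mul_sub, ← Finset.sum_sub_distrib]
    congr 1
    refine Finset.sum_congr rfl fun x _ => ?_
    ring
  rw [this, Finset.mul_sum]
  calc |∑ a, π h a * ∑ x : Rw × S, (m h.2 a x - mhat h.2 a x) * rval x.1|
      ≤ ∑ a, |π h a * ∑ x : Rw × S, (m h.2 a x - mhat h.2 a x) * rval x.1| :=
        Finset.abs_sum_le_sum_abs _ _
    _ ≤ ∑ a, rmax * (π h a * ∑ x : Rw × S, |m h.2 a x - mhat h.2 a x|) := by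
        refine Finset.sum_le_sum fun a _ => ?_
        rw [abs_mul, abs_of_nonneg (hπ0 _ _)]
        calc π h a * |∑ x : Rw × S, (m h.2 a x - mhat h.2 a x) * rval x.1|
            ≤ π h a * (rmax * ∑ x : Rw × S, |m h.2 a x - mhat h.2 a x|) := by
              refine mul_le_mul_of_nonneg_left ?_ (hπ0 _ _)
              calc |∑ x : Rw × S, (m h.2 a x - mhat h.2 a x) * rval x.1|
                  ≤ ∑ x : Rw × S, |(m h.2 a x - mhat h.2 a x) * rval x.1| :=
                    Finset.abs_sum_le_sum_abs _ _
                _ ≤ ∑ x : Rw × S, |m h.2 a x - mhat h.2 a x| * rmax := by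
                    refine Finset.sum_le_sum fun x _ => ?_
                    rw [abs_mul]
                    exact mul_le_mul_of_nonneg_left (hrval _) (abs_nonneg _)
                _ = rmax * ∑ x : Rw × S, |m h.2 a x - mhat h.2 a x| := by
                    rw [← Finset.sum_mul, mul_comm]
          _ = rmax * (π h a * ∑ x : Rw × S, |m h.2 a x - mhat h.2 a x|) := by ring
    _ = ∑ a, rmax * (π h a * ∑ x : Rw × S, |m h.2 a x - mhat h.2 a x|) := rfl

end GSL
end Part2

section Part3
namespace GSL

variable {S A Rw : Type*} [Fintype S] [Fintype A] [Fintype Rw]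
variable {ρ : S → ℝ} {π : Hist S A Rw → A → ℝ} {rval : Rw → ℝ} {γ rmax : ℝ}

lemma abs_sum_mul_le {ι : Type*} [Fintype ι] {P g : ι → ℝ} {c : ℝ}
    (hP0 : ∀ i, 0 ≤ P i) (hP1 : ∑ i, P i = 1) (hg : ∀ i, |g i| ≤ c) :
    |∑ i, P i * g i| ≤ c := by
  calc |∑ i, P i * g i| ≤ ∑ i, |P i * g i| := Finset.abs_sum_le_sum_abs _ _
    _ ≤ ∑ i, P i * c := by
        refine Finset.sum_le_sum fun i _ => ?_
        rw [abs_mul, abs_of_nonneg (hP0 i)]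
        exact mul_le_mul_of_nonneg_left (hg i) (hP0 i)
    _ = c := by rw [← Finset.sum_mul, hP1, one_mul]

/-- expected per-step reward sum for model sequence `M` at horizon `n` -/
noncomputable def Tn (ρ : S → ℝ) (π : Hist S A Rw → A → ℝ) (rval : Rw → ℝ)
    (M : ℕ → S → A → Rw × S → ℝ) (n : ℕ) : ℝ :=
  ∑ h : {l : List (S × A × Rw) // l.length = n} × S,
    histProbT ρ π M h.1.1 h.2 * rbar π rval (M n) (h.1.1, h.2)

lemma abs_Tn_le (hρ0 : ∀ s, 0 ≤ ρ s) (hρ1 : ∑ s, ρ s = 1)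
    (hπ0 : ∀ h a, 0 ≤ π h a) (hπ1 : ∀ h, ∑ a, π h a = 1)
    (hrm : 0 ≤ rmax) (hrval : ∀ r, |rval r| ≤ rmax)
    {M : ℕ → S → A → Rw × S → ℝ} (hM0 : ∀ t s a x, 0 ≤ M t s a x)
    (hM1 : ∀ t s a, ∑ x, M t s a x = 1) (n : ℕ) :
    |Tn ρ π rval M n| ≤ rmax :=
  abs_sum_mul_le (fun h => histProbT_nonneg hρ0 hπ0 hM0 _ _)
    (sum_histProbT hρ1 hπ1 hM1 n)
    (fun h => abs_rbar_le hrm hrval hπ0 hπ1 (hM0 n) (hM1 n) _)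

/-- expected model discrepancy at time k under mhat -/
noncomputable def Dk (ρ : S → ℝ) (π : Hist S A Rw → A → ℝ)
    (m mhat : S → A → Rw × S → ℝ) (k : ℕ) : ℝ :=
  ∑ h : {l : List (S × A × Rw) // l.length = k} × S,
    histProb ρ π mhat h.1.1 h.2 *
      ∑ a, π (h.1.1, h.2) a * ∑ x : Rw × S, |m h.2 a x - mhat h.2 a x|

lemma Dk_nonneg (hρ0 : ∀ s, 0 ≤ ρ s) (hπ0 : ∀ h a, 0 ≤ π h a)
    {m mhat : S → A → Rw × S → ℝ} (hmhat0 : ∀ s a x, 0 ≤ mhat s a x) (k : ℕ) :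
    0 ≤ Dk ρ π m mhat k := by
  refine Finset.sum_nonneg fun h _ => mul_nonneg ?_ (Finset.sum_nonneg fun a _ =>
    mul_nonneg (hπ0 _ _) (Finset.sum_nonneg fun x _ => abs_nonneg _))
  rw [← histProbT_const (ρ := ρ) (π := π) mhat]
  exact histProbT_nonneg hρ0 hπ0 (fun _ => hmhat0) _ _

lemma Dk_le_two (hρ0 : ∀ s, 0 ≤ ρ s) (hρ1 : ∑ s, ρ s = 1)
    (hπ0 : ∀ h a, 0 ≤ π h a) (hπ1 : ∀ h, ∑ a, π h a = 1)
    {m mhat : S → A → Rw × S → ℝ}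
    (hm0 : ∀ s a x, 0 ≤ m s a x) (hm1 : ∀ s a, ∑ x, m s a x = 1)
    (hmhat0 : ∀ s a x, 0 ≤ mhat s a x) (hmhat1 : ∀ s a, ∑ x, mhat s a x = 1) (k : ℕ) :
    Dk ρ π m mhat k ≤ 2 := by
  have hw : ∀ h : Hist S A Rw, ∑ a, π h a * ∑ x : Rw × S, |m h.2 a x - mhat h.2 a x| ≤ 2 := by
    intro h
    calc ∑ a, π h a * ∑ x : Rw × S, |m h.2 a x - mhat h.2 a x|
        ≤ ∑ a, π h a * 2 := by
          refine Finset.sum_le_sum fun a _ => mul_le_mul_of_nonneg_left ?_ (hπ0 _ _)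
          calc ∑ x : Rw × S, |m h.2 a x - mhat h.2 a x|
              ≤ ∑ x : Rw × S, (m h.2 a x + mhat h.2 a x) := by
                refine Finset.sum_le_sum fun x _ => ?_
                calc |m h.2 a x - mhat h.2 a x| ≤ |m h.2 a x| + |mhat h.2 a x| := abs_sub _ _
                  _ = m h.2 a x + mhat h.2 a x := by
                      rw [abs_of_nonneg (hm0 _ _ _), abs_of_nonneg (hmhat0 _ _ _)]
            _ = 2 := by rw [Finset.sum_add_distrib, hm1, hmhat1]; norm_num
      _ = 2 := by rw [← Finset.sum_mul, hπ1, one_mul]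
  have hP0 : ∀ h : {l : List (S × A × Rw) // l.length = k} × S,
      0 ≤ histProb ρ π mhat h.1.1 h.2 := by
    intro h
    rw [← histProbT_const (ρ := ρ) (π := π) mhat]
    exact histProbT_nonneg hρ0 hπ0 (fun _ => hmhat0) _ _
  calc Dk ρ π m mhat k ≤ ∑ h : {l : List (S × A × Rw) // l.length = k} × S,
        histProb ρ π mhat h.1.1 h.2 * 2 :=
        Finset.sum_le_sum fun h _ => mul_le_mul_of_nonneg_left (hw _) (hP0 h)
    _ = 2 := by
        rw [← Finset.sum_mul]
        rw [Finset.sum_congr rfl fun h _ => (histProbT_const (ρ := ρ) (π := π) mhat h.1.1 h.2).symm]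
        rw [sum_histProbT hρ1 hπ1 (fun _ => hmhat1) k, one_mul]

/-- the hybrid model sequence -/
def Mk (m mhat : S → A → Rw × S → ℝ) (k : ℕ) : ℕ → S → A → Rw × S → ℝ :=
  fun t => if t < k then mhat else m

lemma Mk_agree {m mhat : S → A → Rw × S → ℝ} {k t : ℕ} (ht : t < k) :
    Mk m mhat k t = Mk m mhat (k + 1) t := by
  simp [Mk, ht, Nat.lt_succ_of_lt ht]

lemma histProbT_Mk_eq_mhat {m mhat : S → A → Rw × S → ℝ} {k : ℕ}
    {l : List (S × A × Rw)} (hl : l.length ≤ k) (s' : S) :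
    histProbT ρ π (Mk m mhat k) l s' = histProb ρ π mhat l s' := by
  rw [histProbT_congr l s' (M' := fun _ => mhat) (fun t ht => by
    simp [Mk, show t < k by omega]), histProbT_const]

/-- key lemma: total variation between hybrid history distributions -/
lemma deltaP (hρ0 : ∀ s, 0 ≤ ρ s) (hρ1 : ∑ s, ρ s = 1)
    (hπ0 : ∀ h a, 0 ≤ π h a) (hπ1 : ∀ h, ∑ a, π h a = 1)
    {m mhat : S → A → Rw × S → ℝ}
    (hm0 : ∀ s a x, 0 ≤ m s a x) (hm1 : ∀ s a, ∑ x, m s a x = 1)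
    (hmhat0 : ∀ s a x, 0 ≤ mhat s a x) (hmhat1 : ∀ s a, ∑ x, mhat s a x = 1)
    (k : ℕ) : ∀ n, k + 1 ≤ n →
    ∑ h : {l : List (S × A × Rw) // l.length = n} × S,
      |histProbT ρ π (Mk m mhat k) h.1.1 h.2 - histProbT ρ π (Mk m mhat (k+1)) h.1.1 h.2|
      ≤ Dk ρ π m mhat k := by
  intro n hn
  induction n, hn using Nat.le_induction with
  | base =>
    rw [sum_Hn_succ (fun h => |histProbT ρ π (Mk m mhat k) h.1.1 h.2 -
      histProbT ρ π (Mk m mhat (k+1)) h.1.1 h.2|)]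
    apply le_of_eq
    unfold Dk
    refine Finset.sum_congr rfl fun h _ => ?_
    have hPeq : histProbT ρ π (Mk m mhat k) h.1.1 h.2 = histProb ρ π mhat h.1.1 h.2 :=
      histProbT_Mk_eq_mhat (le_of_eq h.1.2) h.2
    have hPeq' : histProbT ρ π (Mk m mhat (k+1)) h.1.1 h.2 = histProb ρ π mhat h.1.1 h.2 :=
      histProbT_Mk_eq_mhat (by rw [h.1.2]; omega) h.2
    have hMk : Mk m mhat k k = m := by simp [Mk]
    have hMk' : Mk m mhat (k+1) k = mhat := by simp [Mk]
    have hP0 : 0 ≤ histProb ρ π mhat h.1.1 h.2 := by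
      rw [← histProbT_const (ρ := ρ) (π := π) mhat]
      exact histProbT_nonneg hρ0 hπ0 (fun _ => hmhat0) _ _
    have step : ∀ a : A, ∀ x : Rw × S,
        |histProbT ρ π (Mk m mhat k) ((consE S A Rw k (h, a, x)).1 :
            {l : List (S × A × Rw) // l.length = k + 1}).1 (consE S A Rw k (h, a, x)).2 -
          histProbT ρ π (Mk m mhat (k+1)) ((consE S A Rw k (h, a, x)).1 :
            {l : List (S × A × Rw) // l.length = k + 1}).1 (consE S A Rw k (h, a, x)).2|
        = histProb ρ π mhat h.1.1 h.2 * (π (h.1.1, h.2) a * |m h.2 a x - mhat h.2 a x|) := by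
      intro a x
      rw [histProbT_consE, histProbT_consE, hPeq, hPeq', hMk, hMk', ← mul_sub, abs_mul,
        abs_of_nonneg (mul_nonneg hP0 (hπ0 _ _)), mul_assoc]
    rw [Finset.sum_congr rfl fun a _ => Finset.sum_congr rfl fun x _ => step a x]
    have e1 : ∀ a : A, ∑ x : Rw × S, histProb ρ π mhat h.1.1 h.2 *
        (π (h.1.1, h.2) a * |m h.2 a x - mhat h.2 a x|)
        = histProb ρ π mhat h.1.1 h.2 *
          (π (h.1.1, h.2) a * ∑ x : Rw × S, |m h.2 a x - mhat h.2 a x|) := by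
      intro a
      rw [← Finset.mul_sum, ← Finset.mul_sum]
    rw [Finset.sum_congr rfl fun a _ => e1 a, ← Finset.mul_sum]
  | succ n hn ih =>
    rw [sum_Hn_succ (fun h => |histProbT ρ π (Mk m mhat k) h.1.1 h.2 -
      histProbT ρ π (Mk m mhat (k+1)) h.1.1 h.2|)]
    have hMk : Mk m mhat k n = m := by simp [Mk]; omega
    have hMk' : Mk m mhat (k+1) n = m := by simp [Mk]; omega
    have step : ∀ (h : {l : List (S × A × Rw) // l.length = n} × S) (a : A) (x : Rw × S),
        |histProbT ρ π (Mk m mhat k) ((consE S A Rw n (h, a, x)).1 :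
            {l : List (S × A × Rw) // l.length = n + 1}).1 (consE S A Rw n (h, a, x)).2 -
          histProbT ρ π (Mk m mhat (k+1)) ((consE S A Rw n (h, a, x)).1 :
            {l : List (S × A × Rw) // l.length = n + 1}).1 (consE S A Rw n (h, a, x)).2|
        = |histProbT ρ π (Mk m mhat k) h.1.1 h.2 - histProbT ρ π (Mk m mhat (k+1)) h.1.1 h.2|
            * (π (h.1.1, h.2) a * m h.2 a x) := by
      intro h a x
      rw [histProbT_consE, histProbT_consE, hMk, hMk', mul_assoc, mul_assoc, ← sub_mul,
        abs_mul, abs_of_nonneg (mul_nonneg (hπ0 _ _) (hm0 _ _ _))]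
    calc ∑ h : {l : List (S × A × Rw) // l.length = n} × S, ∑ a : A, ∑ x : Rw × S,
          |histProbT ρ π (Mk m mhat k) ((consE S A Rw n (h, a, x)).1 :
              {l : List (S × A × Rw) // l.length = n + 1}).1 (consE S A Rw n (h, a, x)).2 -
            histProbT ρ π (Mk m mhat (k+1)) ((consE S A Rw n (h, a, x)).1 :
              {l : List (S × A × Rw) // l.length = n + 1}).1 (consE S A Rw n (h, a, x)).2|
        = ∑ h : {l : List (S × A × Rw) // l.length = n} × S,
            |histProbT ρ π (Mk m mhat k) h.1.1 h.2 -
              histProbT ρ π (Mk m mhat (k+1)) h.1.1 h.2| := by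
          refine Finset.sum_congr rfl fun h _ => ?_
          rw [Finset.sum_congr rfl fun a _ => Finset.sum_congr rfl fun x _ => step h a x]
          have inner : ∀ a : A, ∑ x : Rw × S,
              |histProbT ρ π (Mk m mhat k) h.1.1 h.2 -
                histProbT ρ π (Mk m mhat (k+1)) h.1.1 h.2| * (π (h.1.1, h.2) a * m h.2 a x)
              = |histProbT ρ π (Mk m mhat k) h.1.1 h.2 -
                  histProbT ρ π (Mk m mhat (k+1)) h.1.1 h.2| * π (h.1.1, h.2) a := by
            intro a
            rw [Finset.sum_congr rfl fun x _ => (mul_assoc _ _ _).symm, ← Finset.mul_sum,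
              hm1 h.2 a, mul_one]
          rw [Finset.sum_congr rfl fun a _ => inner a, ← Finset.mul_sum, hπ1 (h.1.1, h.2), mul_one]
      _ ≤ Dk ρ π m mhat k := ih

lemma Tn_congr {M M' : ℕ → S → A → Rw × S → ℝ} {n : ℕ}
    (hag : ∀ t, t ≤ n → M t = M' t) : Tn ρ π rval M n = Tn ρ π rval M' n := by
  unfold Tn
  refine Finset.sum_congr rfl fun h _ => ?_
  rw [histProbT_congr h.1.1 h.2 (fun t ht => hag t (by rw [← h.1.2]; omega)), hag n le_rfl]

lemma abs_Tn_diff (hρ0 : ∀ s, 0 ≤ ρ s) (hρ1 : ∑ s, ρ s = 1)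
    (hπ0 : ∀ h a, 0 ≤ π h a) (hπ1 : ∀ h, ∑ a, π h a = 1)
    (hrm : 0 ≤ rmax) (hrval : ∀ r, |rval r| ≤ rmax)
    {m mhat : S → A → Rw × S → ℝ}
    (hm0 : ∀ s a x, 0 ≤ m s a x) (hm1 : ∀ s a, ∑ x, m s a x = 1)
    (hmhat0 : ∀ s a x, 0 ≤ mhat s a x) (hmhat1 : ∀ s a, ∑ x, mhat s a x = 1)
    (k n : ℕ) :
    |Tn ρ π rval (Mk m mhat k) n - Tn ρ π rval (Mk m mhat (k+1)) n| ≤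
      (if n < k then 0 else rmax * Dk ρ π m mhat k) := by
  have hP0 : ∀ (j : ℕ) (h : {l : List (S × A × Rw) // l.length = j} × S),
      0 ≤ histProb ρ π mhat h.1.1 h.2 := by
    intro j h
    rw [← histProbT_const (ρ := ρ) (π := π) mhat]
    exact histProbT_nonneg hρ0 hπ0 (fun _ => hmhat0) _ _
  rcases lt_trichotomy n k with hlt | heq | hgt
  · rw [if_pos hlt, Tn_congr (fun t ht => Mk_agree (by omega)), sub_self, abs_zero]
  · subst heq
    rw [if_neg (lt_irrefl n)]
    have hMk : Mk m mhat n n = m := by simp [Mk]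
    have hMk' : Mk m mhat (n+1) n = mhat := by simp [Mk]
    have hdiff : Tn ρ π rval (Mk m mhat n) n - Tn ρ π rval (Mk m mhat (n+1)) n
        = ∑ h : {l : List (S × A × Rw) // l.length = n} × S,
            histProb ρ π mhat h.1.1 h.2 *
              (rbar π rval m (h.1.1, h.2) - rbar π rval mhat (h.1.1, h.2)) := by
      unfold Tn
      rw [← Finset.sum_sub_distrib]
      refine Finset.sum_congr rfl fun h _ => ?_
      rw [histProbT_Mk_eq_mhat (le_of_eq h.1.2) h.2,
        histProbT_Mk_eq_mhat (by rw [h.1.2]; omega) h.2, hMk, hMk', ← mul_sub]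
    rw [hdiff]
    calc |∑ h : {l : List (S × A × Rw) // l.length = n} × S,
          histProb ρ π mhat h.1.1 h.2 *
            (rbar π rval m (h.1.1, h.2) - rbar π rval mhat (h.1.1, h.2))|
        ≤ ∑ h : {l : List (S × A × Rw) // l.length = n} × S,
            |histProb ρ π mhat h.1.1 h.2 *
              (rbar π rval m (h.1.1, h.2) - rbar π rval mhat (h.1.1, h.2))| :=
          Finset.abs_sum_le_sum_abs _ _
      _ ≤ ∑ h : {l : List (S × A × Rw) // l.length = n} × S,
            histProb ρ π mhat h.1.1 h.2 *
              (rmax * ∑ a, π (h.1.1, h.2) a * ∑ x : Rw × S, |m h.2 a x - mhat h.2 a x|) := by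
          refine Finset.sum_le_sum fun h _ => ?_
          rw [abs_mul, abs_of_nonneg (hP0 n h)]
          exact mul_le_mul_of_nonneg_left (abs_rbar_sub_le hrm hrval hπ0 _) (hP0 n h)
      _ = rmax * Dk ρ π m mhat n := by
          unfold Dk
          rw [Finset.mul_sum]
          refine Finset.sum_congr rfl fun h _ => ?_
          ring
  · rw [if_neg (by omega)]
    have hMk : Mk m mhat k n = m := by simp [Mk]; omega
    have hMk' : Mk m mhat (k+1) n = m := by simp [Mk]; omega
    have hdiff : Tn ρ π rval (Mk m mhat k) n - Tn ρ π rval (Mk m mhat (k+1)) n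
        = ∑ h : {l : List (S × A × Rw) // l.length = n} × S,
            (histProbT ρ π (Mk m mhat k) h.1.1 h.2 -
              histProbT ρ π (Mk m mhat (k+1)) h.1.1 h.2) * rbar π rval m (h.1.1, h.2) := by
      unfold Tn
      rw [← Finset.sum_sub_distrib]
      refine Finset.sum_congr rfl fun h _ => ?_
      rw [hMk, hMk', ← sub_mul]
    rw [hdiff]
    calc |∑ h : {l : List (S × A × Rw) // l.length = n} × S,
          (histProbT ρ π (Mk m mhat k) h.1.1 h.2 -
            histProbT ρ π (Mk m mhat (k+1)) h.1.1 h.2) * rbar π rval m (h.1.1, h.2)|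
        ≤ ∑ h : {l : List (S × A × Rw) // l.length = n} × S,
            |histProbT ρ π (Mk m mhat k) h.1.1 h.2 -
              histProbT ρ π (Mk m mhat (k+1)) h.1.1 h.2| * |rbar π rval m (h.1.1, h.2)| := by
          refine le_trans (Finset.abs_sum_le_sum_abs _ _) ?_
          refine Finset.sum_le_sum fun h _ => le_of_eq (abs_mul _ _)
      _ ≤ ∑ h : {l : List (S × A × Rw) // l.length = n} × S,
            |histProbT ρ π (Mk m mhat k) h.1.1 h.2 -
              histProbT ρ π (Mk m mhat (k+1)) h.1.1 h.2| * rmax := by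
          refine Finset.sum_le_sum fun h _ => mul_le_mul_of_nonneg_left
            (abs_rbar_le hrm hrval hπ0 hπ1 hm0 hm1 _) (abs_nonneg _)
      _ = (∑ h : {l : List (S × A × Rw) // l.length = n} × S,
            |histProbT ρ π (Mk m mhat k) h.1.1 h.2 -
              histProbT ρ π (Mk m mhat (k+1)) h.1.1 h.2|) * rmax := (Finset.sum_mul _ _ _).symm
      _ ≤ Dk ρ π m mhat k * rmax := by
          refine mul_le_mul_of_nonneg_right ?_ hrm
          exact deltaP hρ0 hρ1 hπ0 hπ1 hm0 hm1 hmhat0 hmhat1 k n (by omega)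
      _ = rmax * Dk ρ π m mhat k := mul_comm _ _

end GSL
end Part3

section Part4
namespace GSL
open Filter

variable {S A Rw : Type*} [Fintype S] [Fintype A] [Fintype Rw]
variable {ρ : S → ℝ} {π : Hist S A Rw → A → ℝ} {rval : Rw → ℝ} {γ rmax : ℝ}

/-- histories as a sigma type over length -/
def sigE (S A Rw : Type*) :
    (Σ n : ℕ, {l : List (S × A × Rw) // l.length = n} × S) ≃ Hist S A Rw where
  toFun p := (p.2.1.1, p.2.2)
  invFun h := ⟨h.1.length, ⟨h.1, rfl⟩, h.2⟩
  left_inv := fun ⟨n, ⟨l, hl⟩, s⟩ => by subst hl; rfl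
  right_inv := fun h => rfl

/-- master lemma: tsum over histories as tsum over lengths -/
lemma tsum_hist (hγ0 : 0 ≤ γ) (hγ1 : γ < 1) (g : Hist S A Rw → ℝ) {c : ℝ}
    (hb : ∀ n : ℕ, ∑ h : {l : List (S × A × Rw) // l.length = n} × S,
      |g (h.1.1, h.2)| ≤ c * γ ^ n) :
    Summable g ∧ ∑' h, g h = ∑' n : ℕ,
      ∑ h : {l : List (S × A × Rw) // l.length = n} × S, g (h.1.1, h.2) := by
  have heval : ∀ p : Σ n : ℕ, {l : List (S × A × Rw) // l.length = n} × S,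
      g (sigE S A Rw p) = g (p.2.1.1, p.2.2) := fun p => rfl
  have habs : Summable fun p : Σ n : ℕ, {l : List (S × A × Rw) // l.length = n} × S =>
      |g (sigE S A Rw p)| := by
    rw [summable_sigma_of_nonneg (fun _ => abs_nonneg _)]
    refine ⟨fun n => Summable.of_finite, ?_⟩
    have : ∀ n : ℕ, (∑' h : {l : List (S × A × Rw) // l.length = n} × S,
        |g (sigE S A Rw ⟨n, h⟩)|) = ∑ h : {l : List (S × A × Rw) // l.length = n} × S,
          |g (h.1.1, h.2)| := fun n => tsum_fintype _
    rw [funext this]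
    refine Summable.of_nonneg_of_le
      (fun n => Finset.sum_nonneg fun h _ => abs_nonneg _) hb ?_
    exact (summable_geometric_of_lt_one hγ0 hγ1).mul_left c
  have hsig : Summable fun p : Σ n : ℕ, {l : List (S × A × Rw) // l.length = n} × S =>
      g (sigE S A Rw p) := habs.of_abs
  have hsum : Summable g := (Equiv.summable_iff (sigE S A Rw)).mp hsig
  refine ⟨hsum, ?_⟩
  rw [← Equiv.tsum_eq (sigE S A Rw) g, hsig.tsum_sigma]
  exact tsum_congr fun n => tsum_fintype _

/-- summability + bound for the standard weighted sums -/
lemma summable_hist (hγ0 : 0 ≤ γ) (hγ1 : γ < 1) (g : Hist S A Rw → ℝ) {c : ℝ}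
    (hb : ∀ n : ℕ, ∑ h : {l : List (S × A × Rw) // l.length = n} × S,
      |g (h.1.1, h.2)| ≤ c * γ ^ n) : Summable g :=
  (tsum_hist hγ0 hγ1 g hb).1

/-- geometric tail sum -/
lemma tsum_tail (hγ0 : 0 ≤ γ) (hγ1 : γ < 1) (c : ℝ) (k : ℕ) :
    ∑' n : ℕ, (if n < k then 0 else γ ^ n * c) = γ ^ k / (1 - γ) * c := by
  have hγne : (1 : ℝ) - γ ≠ 0 := by intro h; nlinarith
  have hg : Summable fun n : ℕ => γ ^ n := summable_geometric_of_lt_one hγ0 hγ1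
  have hsplit : (fun n : ℕ => if n < k then (0:ℝ) else γ ^ n * c)
      = fun n : ℕ => γ ^ n * c - (if n < k then γ ^ n * c else 0) := by
    funext n
    split <;> simp
  have hfin : Summable fun n : ℕ => (if n < k then γ ^ n * c else 0) :=
    summable_of_ne_finset_zero (s := Finset.range k)
      (fun n hn => by rw [Finset.mem_range] at hn; simp [hn])
  rw [hsplit, Summable.tsum_sub (hg.mul_right c) hfin, tsum_mul_right,
    tsum_geometric_of_lt_one hγ0 hγ1]
  have : ∑' n : ℕ, (if n < k then γ ^ n * c else 0) = ∑ n ∈ Finset.range k, γ ^ n * c := by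
    rw [tsum_eq_sum (s := Finset.range k)
      (fun n hn => by rw [Finset.mem_range] at hn; simp [hn])]
    exact Finset.sum_congr rfl fun n hn => by rw [Finset.mem_range] at hn; simp [hn]
  rw [this, ← Finset.sum_mul, geom_sum_eq (by intro h; rw [h] at hγ1; exact lt_irrefl 1 hγ1) k]
  have h1 : (γ ^ k - 1) / (γ - 1) = (1 - γ ^ k) / (1 - γ) := by
    rw [← neg_sub (1:ℝ) (γ ^ k), ← neg_sub (1:ℝ) γ, neg_div_neg_eq]
  rw [h1, inv_mul_eq_div, div_mul_eq_mul_div, div_mul_eq_mul_div, ← sub_div]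
  congr 1
  ring
end GSL
end Part4

section Part5
namespace GSL

variable {S A Rw : Type*} [Fintype S] [Fintype A] [Fintype Rw]
variable {ρ : S → ℝ} {π : Hist S A Rw → A → ℝ} {rval : Rw → ℝ} {γ rmax : ℝ}

lemma Jval_eq (hγ0 : 0 ≤ γ) (hγ1 : γ < 1) (hrm : 0 ≤ rmax)
    (hrval : ∀ r, |rval r| ≤ rmax)
    (hρ0 : ∀ s, 0 ≤ ρ s) (hρ1 : ∑ s, ρ s = 1)
    (hπ0 : ∀ h a, 0 ≤ π h a) (hπ1 : ∀ h, ∑ a, π h a = 1)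
    {m : S → A → Rw × S → ℝ} (hm0 : ∀ s a x, 0 ≤ m s a x) (hm1 : ∀ s a, ∑ x, m s a x = 1) :
    Jval γ rval ρ π m = ∑' n : ℕ, γ ^ n * Tn ρ π rval (fun _ => m) n := by
  have hP0 : ∀ (l : List (S × A × Rw)) (s' : S), 0 ≤ histProb ρ π m l s' := by
    intro l s'
    rw [← histProbT_const (ρ := ρ) (π := π) m]
    exact histProbT_nonneg hρ0 hπ0 (fun _ => hm0) _ _
  have hmass : ∀ n : ℕ, ∑ h : {l : List (S × A × Rw) // l.length = n} × S,
      histProb ρ π m h.1.1 h.2 = 1 := by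
    intro n
    rw [Finset.sum_congr rfl fun h _ => (histProbT_const (ρ := ρ) (π := π) m h.1.1 h.2).symm]
    exact sum_histProbT hρ1 hπ1 (fun _ => hm1) n
  have hJ : Jval γ rval ρ π m = ∑' h : Hist S A Rw,
      γ ^ h.1.length * histProb ρ π m h.1 h.2 * rbar π rval m h := rfl
  have hb : ∀ n : ℕ, ∑ h : {l : List (S × A × Rw) // l.length = n} × S,
      |γ ^ ((h.1.1, h.2) : Hist S A Rw).1.length * histProb ρ π m (h.1.1, h.2).1 (h.1.1, h.2).2 *
        rbar π rval m (h.1.1, h.2)| ≤ rmax * γ ^ n := by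
    intro n
    calc ∑ h : {l : List (S × A × Rw) // l.length = n} × S,
        |γ ^ ((h.1.1, h.2) : Hist S A Rw).1.length * histProb ρ π m (h.1.1, h.2).1 (h.1.1, h.2).2 *
          rbar π rval m (h.1.1, h.2)|
        ≤ ∑ h : {l : List (S × A × Rw) // l.length = n} × S,
            γ ^ n * (histProb ρ π m h.1.1 h.2 * rmax) := by
          refine Finset.sum_le_sum fun h _ => ?_
          have hlen : ((h.1.1, h.2) : Hist S A Rw).1.length = n := h.1.2
          rw [abs_mul, abs_mul, hlen, abs_of_nonneg (pow_nonneg hγ0 n),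
            abs_of_nonneg (hP0 _ _), mul_assoc]
          refine mul_le_mul_of_nonneg_left ?_ (pow_nonneg hγ0 n)
          exact mul_le_mul_of_nonneg_left
            (abs_rbar_le hrm hrval hπ0 hπ1 hm0 hm1 _) (hP0 _ _)
      _ = rmax * γ ^ n := by
          rw [← Finset.mul_sum, ← Finset.sum_mul, hmass n, one_mul, mul_comm]
  obtain ⟨hsum, heq⟩ := tsum_hist hγ0 hγ1
    (fun h : Hist S A Rw => γ ^ h.1.length * histProb ρ π m h.1 h.2 * rbar π rval m h) hb
  rw [hJ, heq]
  refine tsum_congr fun n => ?_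
  unfold Tn
  rw [Finset.mul_sum]
  refine Finset.sum_congr rfl fun h _ => ?_
  have hlen : ((h.1.1, h.2) : Hist S A Rw).1.length = n := h.1.2
  rw [hlen, histProbT_const (ρ := ρ) (π := π) m, mul_assoc]

lemma pi_le_one (hπ0 : ∀ h a, 0 ≤ π h a) (hπ1 : ∀ h, ∑ a, π h a = 1)
    (h : Hist S A Rw) (a : A) : π h a ≤ 1 := by
  rw [← hπ1 h]
  exact Finset.single_le_sum (fun a _ => hπ0 h a) (Finset.mem_univ a)

lemma occ_rhs (hγ0 : 0 ≤ γ) (hγ1 : γ < 1)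
    (hρ0 : ∀ s, 0 ≤ ρ s) (hρ1 : ∑ s, ρ s = 1)
    (hπ0 : ∀ h a, 0 ≤ π h a) (hπ1 : ∀ h, ∑ a, π h a = 1)
    {mhat : S → A → Rw × S → ℝ}
    (hmhat0 : ∀ s a x, 0 ≤ mhat s a x) (hmhat1 : ∀ s a, ∑ x, mhat s a x = 1)
    [DecidableEq S]
    (c : S → A → ℝ) (hc0 : ∀ s a, 0 ≤ c s a) (hc1 : ∀ s a, c s a ≤ 1) :
    ∑ s, ∑ a, occupancy γ ρ π mhat s a * c s a
      = (1 - γ) * ∑' n : ℕ, γ ^ n *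
          ∑ h : {l : List (S × A × Rw) // l.length = n} × S,
            histProb ρ π mhat h.1.1 h.2 * ∑ a, π (h.1.1, h.2) a * c h.2 a := by
  have hP0 : ∀ (l : List (S × A × Rw)) (s' : S), 0 ≤ histProb ρ π mhat l s' := by
    intro l s'
    rw [← histProbT_const (ρ := ρ) (π := π) mhat]
    exact histProbT_nonneg hρ0 hπ0 (fun _ => hmhat0) _ _
  have hmass : ∀ n : ℕ, ∑ h : {l : List (S × A × Rw) // l.length = n} × S,
      histProb ρ π mhat h.1.1 h.2 = 1 := by
    intro n
    rw [Finset.sum_congr rfl fun h _ => (histProbT_const (ρ := ρ) (π := π) mhat h.1.1 h.2).symm]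
    exact sum_histProbT hρ1 hπ1 (fun _ => hmhat1) n
  set F : S × A → Hist S A Rw → ℝ := fun p h =>
    (if h.2 = p.1 then γ ^ h.1.length * histProb ρ π mhat h.1 h.2 * π h p.2 else 0) * c p.1 p.2
    with hF
  have hFbound : ∀ (p : S × A) (n : ℕ),
      ∑ h : {l : List (S × A × Rw) // l.length = n} × S, |F p (h.1.1, h.2)| ≤ 1 * γ ^ n := by
    intro p n
    calc ∑ h : {l : List (S × A × Rw) // l.length = n} × S, |F p (h.1.1, h.2)|
        ≤ ∑ h : {l : List (S × A × Rw) // l.length = n} × S,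
            γ ^ n * histProb ρ π mhat h.1.1 h.2 := by
          refine Finset.sum_le_sum fun h _ => ?_
          rw [hF]
          simp only []
          have hlen : ((h.1.1, h.2) : Hist S A Rw).1.length = n := h.1.2
          rw [abs_mul]
          split
          · rw [hlen, abs_mul, abs_mul, abs_of_nonneg (pow_nonneg hγ0 n),
              abs_of_nonneg (hP0 _ _), abs_of_nonneg (hπ0 _ _), abs_of_nonneg (hc0 _ _)]
            calc γ ^ n * histProb ρ π mhat h.1.1 h.2 * π (h.1.1, h.2) p.2 * c p.1 p.2
                ≤ γ ^ n * histProb ρ π mhat h.1.1 h.2 * 1 * 1 := by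
                  refine mul_le_mul (mul_le_mul le_rfl (pi_le_one hπ0 hπ1 _ _)
                    (hπ0 _ _) (mul_nonneg (pow_nonneg hγ0 n) (hP0 _ _))) (hc1 _ _)
                    (hc0 _ _) ?_
                  exact mul_nonneg (mul_nonneg (pow_nonneg hγ0 n) (hP0 _ _)) zero_le_one
              _ = γ ^ n * histProb ρ π mhat h.1.1 h.2 := by ring
          · simp [mul_nonneg (pow_nonneg hγ0 n) (hP0 h.1.1 h.2)]
      _ = 1 * γ ^ n := by
          rw [← Finset.mul_sum, hmass n, mul_one, one_mul]
  have hFsum : ∀ p : S × A, Summable (F p) := fun p =>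
    summable_hist hγ0 hγ1 (F p) (hFbound p)
  have step1 : ∑ s, ∑ a, occupancy γ ρ π mhat s a * c s a
      = (1 - γ) * ∑ p : S × A, ∑' h : Hist S A Rw, F p h := by
    rw [Finset.mul_sum, Fintype.sum_prod_type]
    refine Finset.sum_congr rfl fun s _ => ?_
    refine Finset.sum_congr rfl fun a _ => ?_
    simp only [hF]
    unfold occupancy
    rw [mul_assoc, ← tsum_mul_right]
  have step2 : ∑ p : S × A, ∑' h : Hist S A Rw, F p h
      = ∑' h : Hist S A Rw, ∑ p : S × A, F p h :=
    (Summable.tsum_finsetSum (fun p _ => hFsum p)).symm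
  have step3 : ∀ h : Hist S A Rw, ∑ p : S × A, F p h
      = γ ^ h.1.length * histProb ρ π mhat h.1 h.2 * ∑ a, π h a * c h.2 a := by
    intro h
    rw [Fintype.sum_prod_type]
    have hrow : ∀ s, ∑ a, F (s, a) h = if h.2 = s then
        γ ^ h.1.length * histProb ρ π mhat h.1 h.2 * ∑ a, π h a * c s a else 0 := by
      intro s
      by_cases hs : h.2 = s
      · rw [if_pos hs, Finset.mul_sum]
        refine Finset.sum_congr rfl fun a _ => ?_
        simp only [hF]
        rw [if_pos hs, mul_assoc]
      · rw [if_neg hs]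
        refine Finset.sum_eq_zero fun a _ => ?_
        simp only [hF]
        rw [if_neg hs, zero_mul]
    rw [Finset.sum_congr rfl fun s _ => hrow s, Finset.sum_ite_eq Finset.univ h.2 _,
      if_pos (Finset.mem_univ _)]
  have hw01 : ∀ h : Hist S A Rw, 0 ≤ ∑ a, π h a * c h.2 a ∧ ∑ a, π h a * c h.2 a ≤ 1 := by
    intro h
    constructor
    · exact Finset.sum_nonneg fun a _ => mul_nonneg (hπ0 _ _) (hc0 _ _)
    · calc ∑ a, π h a * c h.2 a ≤ ∑ a, π h a * 1 :=
          Finset.sum_le_sum fun a _ => mul_le_mul_of_nonneg_left (hc1 _ _) (hπ0 _ _)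
        _ = 1 := by rw [← Finset.sum_mul, hπ1, one_mul]
  have hgb : ∀ n : ℕ, ∑ h : {l : List (S × A × Rw) // l.length = n} × S,
      |γ ^ ((h.1.1, h.2) : Hist S A Rw).1.length *
        histProb ρ π mhat (h.1.1, h.2).1 (h.1.1, h.2).2 *
        ∑ a, π (h.1.1, h.2) a * c (h.1.1, h.2).2 a| ≤ 1 * γ ^ n := by
    intro n
    calc ∑ h : {l : List (S × A × Rw) // l.length = n} × S,
        |γ ^ ((h.1.1, h.2) : Hist S A Rw).1.length *
          histProb ρ π mhat (h.1.1, h.2).1 (h.1.1, h.2).2 *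
          ∑ a, π (h.1.1, h.2) a * c (h.1.1, h.2).2 a|
        ≤ ∑ h : {l : List (S × A × Rw) // l.length = n} × S,
            γ ^ n * histProb ρ π mhat h.1.1 h.2 := by
          refine Finset.sum_le_sum fun h _ => ?_
          have hlen : ((h.1.1, h.2) : Hist S A Rw).1.length = n := h.1.2
          rw [abs_mul, abs_mul, hlen, abs_of_nonneg (pow_nonneg hγ0 n),
            abs_of_nonneg (hP0 _ _), abs_of_nonneg (hw01 (h.1.1, h.2)).1, mul_assoc]
          refine mul_le_mul_of_nonneg_left ?_ (pow_nonneg hγ0 n)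
          calc histProb ρ π mhat h.1.1 h.2 * ∑ a, π (h.1.1, h.2) a * c h.2 a
              ≤ histProb ρ π mhat h.1.1 h.2 * 1 :=
                mul_le_mul_of_nonneg_left (hw01 (h.1.1, h.2)).2 (hP0 _ _)
            _ = histProb ρ π mhat h.1.1 h.2 := mul_one _
      _ = 1 * γ ^ n := by
          rw [← Finset.mul_sum, hmass n, mul_one, one_mul]
  obtain ⟨hgsum, hgeq⟩ := tsum_hist hγ0 hγ1
    (fun h : Hist S A Rw => γ ^ h.1.length * histProb ρ π mhat h.1 h.2 *
      ∑ a, π h a * c h.2 a) hgb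
  rw [step1, step2, show (∑' h : Hist S A Rw, ∑ p : S × A, F p h)
      = ∑' h : Hist S A Rw, γ ^ h.1.length * histProb ρ π mhat h.1 h.2 *
          ∑ a, π h a * c h.2 a from tsum_congr step3, hgeq]
  congr 1
  refine tsum_congr fun n => ?_
  rw [Finset.mul_sum]
  refine Finset.sum_congr rfl fun h _ => ?_
  have hlen : ((h.1.1, h.2) : Hist S A Rw).1.length = n := h.1.2
  rw [hlen, mul_assoc]

end GSL
end Part5

end Machinery
open Filter in
/-- General simulation lemma: for any history-dependent policy `π` and two models
`m, m̂` with rewards bounded by `r_max`,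
`|J(π,m) − J(π,m̂)| ≤ (2r_max/(1−γ)²)·E_{(s,a)∼d^π_{m̂}}[TV(m(s,a), m̂(s,a))]`. -/
theorem general_simulation_lemma {S A Rw : Type*}
    [Fintype S] [Fintype A] [Fintype Rw] [DecidableEq S]
    (γ rmax : ℝ) (hγ0 : 0 ≤ γ) (hγ1 : γ < 1) (hr : 0 < rmax)
    (rval : Rw → ℝ) (hrval : ∀ r, |rval r| ≤ rmax)
    (ρ : S → ℝ) (hρ0 : ∀ s, 0 ≤ ρ s) (hρ1 : ∑ s, ρ s = 1)
    (π : Hist S A Rw → A → ℝ)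
    (hπ0 : ∀ h a, 0 ≤ π h a) (hπ1 : ∀ h, ∑ a, π h a = 1)
    (m mhat : S → A → Rw × S → ℝ)
    (hm0 : ∀ s a x, 0 ≤ m s a x) (hm1 : ∀ s a, ∑ x, m s a x = 1)
    (hmhat0 : ∀ s a x, 0 ≤ mhat s a x) (hmhat1 : ∀ s a, ∑ x, mhat s a x = 1) :
    |Jval γ rval ρ π m - Jval γ rval ρ π mhat| ≤
      (2 * rmax / (1 - γ) ^ 2) *
        ∑ s, ∑ a, occupancy γ ρ π mhat s a *
          ((1 / 2) * ∑ x, |m s a x - mhat s a x|) := by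
  classical
  have hrm : 0 ≤ rmax := le_of_lt hr
  have h1γ : (0:ℝ) < 1 - γ := by linarith
  have h1γne : (1:ℝ) - γ ≠ 0 := ne_of_gt h1γ
  have hMk0 : ∀ k t s a x, 0 ≤ GSL.Mk m mhat k t s a x := by
    intro k t s a x
    by_cases ht : t < k
    · simpa [GSL.Mk, ht] using hmhat0 s a x
    · simpa [GSL.Mk, ht] using hm0 s a x
  have hMk1 : ∀ k t s a, ∑ x, GSL.Mk m mhat k t s a x = 1 := by
    intro k t s a
    by_cases ht : t < k
    · simpa [GSL.Mk, ht] using hmhat1 s a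
    · simpa [GSL.Mk, ht] using hm1 s a
  have hsumT : ∀ (M : ℕ → S → A → Rw × S → ℝ), (∀ t s a x, 0 ≤ M t s a x) →
      (∀ t s a, ∑ x, M t s a x = 1) →
      Summable (fun n : ℕ => γ ^ n * GSL.Tn ρ π rval M n) := by
    intro M hM0 hM1
    refine Summable.of_abs (Summable.of_nonneg_of_le (fun n => abs_nonneg _) (fun n => ?_)
      ((summable_geometric_of_lt_one hγ0 hγ1).mul_left rmax))
    rw [abs_mul, abs_of_nonneg (pow_nonneg hγ0 n)]
    calc γ ^ n * |GSL.Tn ρ π rval M n| ≤ γ ^ n * rmax :=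
        mul_le_mul_of_nonneg_left
          (GSL.abs_Tn_le hρ0 hρ1 hπ0 hπ1 hrm hrval hM0 hM1 n) (pow_nonneg hγ0 n)
      _ = rmax * γ ^ n := mul_comm _ _
  set Jh : ℕ → ℝ := fun k => ∑' n : ℕ, γ ^ n * GSL.Tn ρ π rval (GSL.Mk m mhat k) n with hJh
  have hJh0 : Jh 0 = Jval γ rval ρ π m := by
    rw [GSL.Jval_eq hγ0 hγ1 hrm hrval hρ0 hρ1 hπ0 hπ1 hm0 hm1]
    simp only [hJh]
    have hM : GSL.Mk m mhat 0 = fun _ => m := by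
      funext t
      simp [GSL.Mk]
    rw [hM]
  have hJmhat : Jval γ rval ρ π mhat
      = ∑' n : ℕ, γ ^ n * GSL.Tn ρ π rval (fun _ => mhat) n :=
    GSL.Jval_eq hγ0 hγ1 hrm hrval hρ0 hρ1 hπ0 hπ1 hmhat0 hmhat1
  have hDk0 : ∀ k, 0 ≤ GSL.Dk ρ π m mhat k := fun k => GSL.Dk_nonneg hρ0 hπ0 hmhat0 k
  have hDk2 : ∀ k, GSL.Dk ρ π m mhat k ≤ 2 :=
    fun k => GSL.Dk_le_two hρ0 hρ1 hπ0 hπ1 hm0 hm1 hmhat0 hmhat1 k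
  have hstep : ∀ k, |Jh k - Jh (k+1)| ≤
      rmax * GSL.Dk ρ π m mhat k * (γ ^ k / (1 - γ)) := by
    intro k
    have hs1 := hsumT _ (hMk0 k) (hMk1 k)
    have hs2 := hsumT _ (hMk0 (k+1)) (hMk1 (k+1))
    simp only [hJh]
    rw [← Summable.tsum_sub hs1 hs2]
    have hpt : ∀ n, |γ ^ n * GSL.Tn ρ π rval (GSL.Mk m mhat k) n -
        γ ^ n * GSL.Tn ρ π rval (GSL.Mk m mhat (k+1)) n| ≤
        (if n < k then 0 else γ ^ n * (rmax * GSL.Dk ρ π m mhat k)) := by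
      intro n
      rw [← mul_sub, abs_mul, abs_of_nonneg (pow_nonneg hγ0 n)]
      have hT := GSL.abs_Tn_diff hρ0 hρ1 hπ0 hπ1 hrm hrval hm0 hm1 hmhat0 hmhat1 k n
      by_cases hn : n < k
      · rw [if_pos hn] at hT ⊢
        have h0 : |GSL.Tn ρ π rval (GSL.Mk m mhat k) n -
            GSL.Tn ρ π rval (GSL.Mk m mhat (k+1)) n| = 0 :=
          le_antisymm hT (abs_nonneg _)
        rw [h0, mul_zero]
      · rw [if_neg hn] at hT ⊢
        exact mul_le_mul_of_nonneg_left hT (pow_nonneg hγ0 n)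
    have hbsum : Summable (fun n : ℕ =>
        (if n < k then (0:ℝ) else γ ^ n * (rmax * GSL.Dk ρ π m mhat k))) := by
      refine Summable.of_nonneg_of_le (fun n => ?_) (fun n => ?_)
        ((summable_geometric_of_lt_one hγ0 hγ1).mul_right (rmax * GSL.Dk ρ π m mhat k))
      · split
        · exact le_refl 0
        · exact mul_nonneg (pow_nonneg hγ0 n) (mul_nonneg hrm (hDk0 k))
      · split
        · exact mul_nonneg (pow_nonneg hγ0 n) (mul_nonneg hrm (hDk0 k))
        · exact le_rfl
    have habsf : Summable (fun n => |γ ^ n * GSL.Tn ρ π rval (GSL.Mk m mhat k) n -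
        γ ^ n * GSL.Tn ρ π rval (GSL.Mk m mhat (k+1)) n|) :=
      Summable.of_nonneg_of_le (fun n => abs_nonneg _) hpt hbsum
    calc |∑' n : ℕ, (γ ^ n * GSL.Tn ρ π rval (GSL.Mk m mhat k) n -
          γ ^ n * GSL.Tn ρ π rval (GSL.Mk m mhat (k+1)) n)|
        ≤ ∑' n : ℕ, |γ ^ n * GSL.Tn ρ π rval (GSL.Mk m mhat k) n -
            γ ^ n * GSL.Tn ρ π rval (GSL.Mk m mhat (k+1)) n| := by
          have := norm_tsum_le_tsum_norm (f := fun n : ℕ =>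
            γ ^ n * GSL.Tn ρ π rval (GSL.Mk m mhat k) n -
              γ ^ n * GSL.Tn ρ π rval (GSL.Mk m mhat (k+1)) n)
            (by simpa [Real.norm_eq_abs] using habsf)
          simpa [Real.norm_eq_abs] using this
      _ ≤ ∑' n : ℕ, (if n < k then 0 else γ ^ n * (rmax * GSL.Dk ρ π m mhat k)) :=
          Summable.tsum_le_tsum hpt habsf hbsum
      _ = γ ^ k / (1 - γ) * (rmax * GSL.Dk ρ π m mhat k) := GSL.tsum_tail hγ0 hγ1 _ k
      _ = rmax * GSL.Dk ρ π m mhat k * (γ ^ k / (1 - γ)) := by ring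
  have htail : ∀ K, |Jh K - Jval γ rval ρ π mhat| ≤ γ ^ K / (1 - γ) * (2 * rmax) := by
    intro K
    have hs1 := hsumT _ (hMk0 K) (hMk1 K)
    have hs2 := hsumT (fun _ => mhat) (fun _ => hmhat0) (fun _ => hmhat1)
    rw [hJmhat]
    simp only [hJh]
    rw [← Summable.tsum_sub hs1 hs2]
    have hpt : ∀ n, |γ ^ n * GSL.Tn ρ π rval (GSL.Mk m mhat K) n -
        γ ^ n * GSL.Tn ρ π rval (fun _ => mhat) n| ≤
        (if n < K then 0 else γ ^ n * (2 * rmax)) := by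
      intro n
      rw [← mul_sub, abs_mul, abs_of_nonneg (pow_nonneg hγ0 n)]
      by_cases hn : n < K
      · rw [if_pos hn]
        have : GSL.Tn ρ π rval (GSL.Mk m mhat K) n = GSL.Tn ρ π rval (fun _ => mhat) n :=
          GSL.Tn_congr (fun t ht => by simp [GSL.Mk, show t < K by omega])
        rw [this, sub_self, abs_zero, mul_zero]
      · rw [if_neg hn]
        refine mul_le_mul_of_nonneg_left ?_ (pow_nonneg hγ0 n)
        calc |GSL.Tn ρ π rval (GSL.Mk m mhat K) n - GSL.Tn ρ π rval (fun _ => mhat) n|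
            ≤ |GSL.Tn ρ π rval (GSL.Mk m mhat K) n| + |GSL.Tn ρ π rval (fun _ => mhat) n| :=
              abs_sub _ _
          _ ≤ rmax + rmax := add_le_add
              (GSL.abs_Tn_le hρ0 hρ1 hπ0 hπ1 hrm hrval (hMk0 K) (hMk1 K) n)
              (GSL.abs_Tn_le hρ0 hρ1 hπ0 hπ1 hrm hrval (fun _ => hmhat0) (fun _ => hmhat1) n)
          _ = 2 * rmax := by ring
    have hbsum : Summable (fun n : ℕ => (if n < K then (0:ℝ) else γ ^ n * (2 * rmax))) := by
      refine Summable.of_nonneg_of_le (fun n => ?_) (fun n => ?_)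
        ((summable_geometric_of_lt_one hγ0 hγ1).mul_right (2 * rmax))
      · split
        · exact le_refl 0
        · exact mul_nonneg (pow_nonneg hγ0 n) (by linarith)
      · split
        · exact mul_nonneg (pow_nonneg hγ0 n) (by linarith)
        · exact le_rfl
    have habsf : Summable (fun n => |γ ^ n * GSL.Tn ρ π rval (GSL.Mk m mhat K) n -
        γ ^ n * GSL.Tn ρ π rval (fun _ => mhat) n|) :=
      Summable.of_nonneg_of_le (fun n => abs_nonneg _) hpt hbsum
    calc |∑' n : ℕ, (γ ^ n * GSL.Tn ρ π rval (GSL.Mk m mhat K) n -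
          γ ^ n * GSL.Tn ρ π rval (fun _ => mhat) n)|
        ≤ ∑' n : ℕ, |γ ^ n * GSL.Tn ρ π rval (GSL.Mk m mhat K) n -
            γ ^ n * GSL.Tn ρ π rval (fun _ => mhat) n| := by
          have := norm_tsum_le_tsum_norm (f := fun n : ℕ =>
            γ ^ n * GSL.Tn ρ π rval (GSL.Mk m mhat K) n -
              γ ^ n * GSL.Tn ρ π rval (fun _ => mhat) n)
            (by simpa [Real.norm_eq_abs] using habsf)
          simpa [Real.norm_eq_abs] using this
      _ ≤ ∑' n : ℕ, (if n < K then 0 else γ ^ n * (2 * rmax)) :=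
          Summable.tsum_le_tsum hpt habsf hbsum
      _ = γ ^ K / (1 - γ) * (2 * rmax) := GSL.tsum_tail hγ0 hγ1 _ K
  have htel : ∀ K, Jval γ rval ρ π m - Jval γ rval ρ π mhat
      = (∑ k ∈ Finset.range K, (Jh k - Jh (k+1))) + (Jh K - Jval γ rval ρ π mhat) := by
    intro K
    rw [Finset.sum_range_sub' Jh K, hJh0]
    ring
  have hsumD : Summable (fun k : ℕ => γ ^ k * GSL.Dk ρ π m mhat k) :=
    Summable.of_nonneg_of_le (fun k => mul_nonneg (pow_nonneg hγ0 k) (hDk0 k))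
      (fun k => mul_le_mul_of_nonneg_left (hDk2 k) (pow_nonneg hγ0 k))
      ((summable_geometric_of_lt_one hγ0 hγ1).mul_right 2)
  have hRHS : (2 * rmax / (1 - γ) ^ 2) *
      ∑ s, ∑ a, occupancy γ ρ π mhat s a * ((1 / 2) * ∑ x, |m s a x - mhat s a x|)
      = (rmax / (1 - γ)) * ∑' k : ℕ, γ ^ k * GSL.Dk ρ π m mhat k := by
    have hc0 : ∀ s a, 0 ≤ (1/2 : ℝ) * ∑ x : Rw × S, |m s a x - mhat s a x| :=
      fun s a => mul_nonneg (by norm_num) (Finset.sum_nonneg fun x _ => abs_nonneg _)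
    have hc1 : ∀ s a, (1/2 : ℝ) * ∑ x : Rw × S, |m s a x - mhat s a x| ≤ 1 := by
      intro s a
      have : ∑ x : Rw × S, |m s a x - mhat s a x| ≤ 2 := by
        calc ∑ x : Rw × S, |m s a x - mhat s a x|
            ≤ ∑ x : Rw × S, (m s a x + mhat s a x) := by
              refine Finset.sum_le_sum fun x _ => ?_
              calc |m s a x - mhat s a x| ≤ |m s a x| + |mhat s a x| := abs_sub _ _
                _ = m s a x + mhat s a x := by
                    rw [abs_of_nonneg (hm0 _ _ _), abs_of_nonneg (hmhat0 _ _ _)]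
          _ = 2 := by rw [Finset.sum_add_distrib, hm1, hmhat1]; norm_num
      linarith
    rw [GSL.occ_rhs hγ0 hγ1 hρ0 hρ1 hπ0 hπ1 hmhat0 hmhat1 _ hc0 hc1]
    have hEn : ∀ n : ℕ, (∑ h : {l : List (S × A × Rw) // l.length = n} × S,
        histProb ρ π mhat h.1.1 h.2 *
          ∑ a, π (h.1.1, h.2) a * ((1/2 : ℝ) * ∑ x : Rw × S, |m h.2 a x - mhat h.2 a x|))
        = (1/2 : ℝ) * GSL.Dk ρ π m mhat n := by
      intro n
      unfold GSL.Dk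
      rw [Finset.mul_sum]
      refine Finset.sum_congr rfl fun h _ => ?_
      rw [show (∑ a, π (h.1.1, h.2) a * ((1/2 : ℝ) * ∑ x : Rw × S, |m h.2 a x - mhat h.2 a x|))
          = (1/2 : ℝ) * ∑ a, π (h.1.1, h.2) a * ∑ x : Rw × S, |m h.2 a x - mhat h.2 a x| by
        rw [Finset.mul_sum]
        exact Finset.sum_congr rfl fun a _ => by ring]
      ring
    rw [tsum_congr fun n => by rw [hEn n]]
    rw [tsum_congr (fun n => show γ ^ n * ((1/2 : ℝ) * GSL.Dk ρ π m mhat n)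
      = (1/2 : ℝ) * (γ ^ n * GSL.Dk ρ π m mhat n) by ring), tsum_mul_left]
    field_simp
  have hkey : ∀ K : ℕ, |Jval γ rval ρ π m - Jval γ rval ρ π mhat| ≤
      (rmax / (1 - γ)) * (∑' k : ℕ, γ ^ k * GSL.Dk ρ π m mhat k)
        + γ ^ K / (1 - γ) * (2 * rmax) := by
    intro K
    calc |Jval γ rval ρ π m - Jval γ rval ρ π mhat|
        = |(∑ k ∈ Finset.range K, (Jh k - Jh (k+1))) + (Jh K - Jval γ rval ρ π mhat)| := by
          rw [htel K]
      _ ≤ |∑ k ∈ Finset.range K, (Jh k - Jh (k+1))| + |Jh K - Jval γ rval ρ π mhat| :=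
          abs_add_le _ _
      _ ≤ (∑ k ∈ Finset.range K, rmax * GSL.Dk ρ π m mhat k * (γ ^ k / (1 - γ)))
            + γ ^ K / (1 - γ) * (2 * rmax) :=
          add_le_add (le_trans (Finset.abs_sum_le_sum_abs _ _)
            (Finset.sum_le_sum fun k _ => hstep k)) (htail K)
      _ ≤ (rmax / (1 - γ)) * (∑' k : ℕ, γ ^ k * GSL.Dk ρ π m mhat k)
            + γ ^ K / (1 - γ) * (2 * rmax) := by
          refine add_le_add_left ?_ _
          rw [show (∑ k ∈ Finset.range K, rmax * GSL.Dk ρ π m mhat k * (γ ^ k / (1 - γ)))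
              = (rmax / (1 - γ)) * ∑ k ∈ Finset.range K, γ ^ k * GSL.Dk ρ π m mhat k by
            rw [Finset.mul_sum]
            exact Finset.sum_congr rfl fun k _ => by ring]
          refine mul_le_mul_of_nonneg_left ?_ (div_nonneg hrm h1γ.le)
          exact Summable.sum_le_tsum _ (fun k _ => mul_nonneg (pow_nonneg hγ0 k) (hDk0 k)) hsumD
  rw [hRHS]
  have hlim : Tendsto (fun K : ℕ =>
      (rmax / (1 - γ)) * (∑' k : ℕ, γ ^ k * GSL.Dk ρ π m mhat k)
        + γ ^ K / (1 - γ) * (2 * rmax)) atTop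
      (nhds ((rmax / (1 - γ)) * (∑' k : ℕ, γ ^ k * GSL.Dk ρ π m mhat k))) := by
    have h2 : Tendsto (fun K : ℕ => γ ^ K / (1 - γ) * (2 * rmax)) atTop (nhds 0) := by
      have := ((tendsto_pow_atTop_nhds_zero_of_lt_one hγ0 hγ1).div_const (1 - γ)).mul_const
        (2 * rmax)
      simpa using this
    simpa using tendsto_const_nhds.add h2
  exact ge_of_tendsto' hlim hkey
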